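/- arXiv:2012.14611 — 2 statements merged into one kernel-verified Lean document; each statement's English description precedes it below -/
import Mathlib

section
/- Let P be a partial order, f and g order automorphisms of P, A ⊆ P a finite subset, and γ : A → P a map such that for all x, y ∈ A and all i : ℤ, x ≤ f^i(y) iff γ(x) ≤ g^i(γ(y)). Then there exists a unique map h : f^ℤ[A] → P extending γ such that for all u, v ∈ f^ℤ[A] and all i : ℤ, u ≤ f^i(v) iff h(u) ≤ g^i(h(v)); moreover h is injective, its range is g^ℤ[γ[A]], and h(f(u)) = g(h(u)) for all u ∈ f^ℤ[A]. Explicitly, h is given by h(f^i(x)) = g^i(γ(x)) for x ∈ A and i : ℤ, and this is well defined. -/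
variable {P : Type*} [PartialOrder P]

private lemma zpow_apply_add (f : P ≃o P) (i j : ℤ) (x : P) :
    (f ^ (i + j)) x = (f ^ i) ((f ^ j) x) := by rw [zpow_add]; rfl

private lemma zpow_apply_le_iff (f : P ≃o P) (i : ℤ) {x y : P} :
    (f ^ i) x ≤ (f ^ i) y ↔ x ≤ y := (f ^ i).le_iff_le

private lemma zpow_apply_neg_apply (f : P ≃o P) (i : ℤ) (x : P) :
    (f ^ (-i)) ((f ^ i) x) = x := by
  rw [← zpow_apply_add]; simp

/-- A finite partial `L`-isomorphism extends uniquely to the generated orbits: if `A` is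
finite and `γ` satisfies `x ≤ f^i y ↔ γ x ≤ g^i (γ y)` on `A`, then there is a map `h`,
unique on `f^ℤ[A]`, extending `γ`, satisfying the same equivalences on `f^ℤ[A]`,
injective there with image `g^ℤ[γ[A]]`, commuting with `f` and `g`, and explicitly given
by `h (f^i x) = g^i (γ x)`. -/
theorem finite_partial_L_isom_extends (f g : P ≃o P) (A : Set P) (hA : A.Finite)
    (γ : P → P) (hγ : ∀ x ∈ A, ∀ y ∈ A, ∀ i : ℤ, x ≤ (f ^ i) y ↔ γ x ≤ (g ^ i) (γ y)) :
    ∃ h : P → P,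
      (∀ x ∈ A, h x = γ x) ∧
      (∀ u ∈ {u : P | ∃ i : ℤ, ∃ x ∈ A, (f ^ i) x = u},
        ∀ v ∈ {u : P | ∃ i : ℤ, ∃ x ∈ A, (f ^ i) x = u},
        ∀ i : ℤ, u ≤ (f ^ i) v ↔ h u ≤ (g ^ i) (h v)) ∧
      Set.InjOn h {u : P | ∃ i : ℤ, ∃ x ∈ A, (f ^ i) x = u} ∧
      h '' {u : P | ∃ i : ℤ, ∃ x ∈ A, (f ^ i) x = u}
        = {w : P | ∃ i : ℤ, ∃ x ∈ A, (g ^ i) (γ x) = w} ∧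
      (∀ u ∈ {u : P | ∃ i : ℤ, ∃ x ∈ A, (f ^ i) x = u}, h (f u) = g (h u)) ∧
      (∀ x ∈ A, ∀ i : ℤ, h ((f ^ i) x) = (g ^ i) (γ x)) ∧
      (∀ h' : P → P, (∀ x ∈ A, h' x = γ x) →
        (∀ u ∈ {u : P | ∃ i : ℤ, ∃ x ∈ A, (f ^ i) x = u},
          ∀ v ∈ {u : P | ∃ i : ℤ, ∃ x ∈ A, (f ^ i) x = u},
          ∀ i : ℤ, u ≤ (f ^ i) v ↔ h' u ≤ (g ^ i) (h' v)) →
        ∀ u ∈ {u : P | ∃ i : ℤ, ∃ x ∈ A, (f ^ i) x = u}, h' u = h u) := by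
  classical
  -- key transfer lemma
  have key : ∀ i j : ℤ, ∀ x ∈ A, ∀ y ∈ A, (f ^ i) x ≤ (f ^ j) y ↔
      (g ^ i) (γ x) ≤ (g ^ j) (γ y) := by
    intro i j x hx y hy
    constructor
    · intro hle
      have h1 : x ≤ (f ^ (j - i)) y := by
        have := (zpow_apply_le_iff f (-i)).2 hle
        rwa [zpow_apply_neg_apply, ← zpow_apply_add, neg_add_eq_sub] at this
      have h2 := (hγ x hx y hy (j - i)).1 h1
      have := (zpow_apply_le_iff g i).2 h2
      rwa [← zpow_apply_add, add_sub_cancel] at this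
    · intro hle
      have h1 : γ x ≤ (g ^ (j - i)) (γ y) := by
        have := (zpow_apply_le_iff g (-i)).2 hle
        rwa [zpow_apply_neg_apply, ← zpow_apply_add, neg_add_eq_sub] at this
      have h2 := (hγ x hx y hy (j - i)).2 h1
      have := (zpow_apply_le_iff f i).2 h2
      rwa [← zpow_apply_add, add_sub_cancel] at this
  have keyeq : ∀ i j : ℤ, ∀ x ∈ A, ∀ y ∈ A, (f ^ i) x = (f ^ j) y →
      (g ^ i) (γ x) = (g ^ j) (γ y) := by
    intro i j x hx y hy heq
    exact le_antisymm ((key i j x hx y hy).1 heq.le) ((key j i y hy x hx).1 heq.ge)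
  set S : Set P := {u : P | ∃ i : ℤ, ∃ x ∈ A, (f ^ i) x = u} with hS
  set h : P → P := fun u =>
    if hu : u ∈ S then (g ^ hu.choose) (γ hu.choose_spec.choose) else u with hhdef
  -- explicit formula
  have hform : ∀ x ∈ A, ∀ i : ℤ, h ((f ^ i) x) = (g ^ i) (γ x) := by
    intro x hx i
    have hu : (f ^ i) x ∈ S := ⟨i, x, hx, rfl⟩
    have : h ((f ^ i) x) = (g ^ hu.choose) (γ hu.choose_spec.choose) := by
      simp only [hhdef, dif_pos hu]
    rw [this]
    exact keyeq hu.choose i hu.choose_spec.choose hu.choose_spec.choose_spec.1 x hx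
      hu.choose_spec.choose_spec.2
  have hAS : ∀ x ∈ A, x ∈ S := fun x hx => ⟨0, x, hx, by simp⟩
  have hext : ∀ x ∈ A, h x = γ x := by
    intro x hx
    have := hform x hx 0
    simpa using this
  have hequiv : ∀ u ∈ S, ∀ v ∈ S, ∀ i : ℤ, u ≤ (f ^ i) v ↔ h u ≤ (g ^ i) (h v) := by
    rintro u ⟨j, x, hx, rfl⟩ v ⟨k, y, hy, rfl⟩ i
    rw [hform x hx j, hform y hy k, ← zpow_apply_add, ← zpow_apply_add]
    exact key j (i + k) x hx y hy
  refine ⟨h, hext, hequiv, ?_, ?_, ?_, hform, ?_⟩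
  · -- injective
    rintro u hu v hv heq
    have h1 : u ≤ v := (hequiv u hu v hv 0).2 (by simpa using heq.le)
    have h2 : v ≤ u := (hequiv v hv u hu 0).2 (by simpa using heq.ge)
    exact le_antisymm h1 h2
  · -- image
    ext w
    constructor
    · rintro ⟨u, ⟨i, x, hx, rfl⟩, rfl⟩
      exact ⟨i, x, hx, (hform x hx i).symm⟩
    · rintro ⟨i, x, hx, rfl⟩
      exact ⟨(f ^ i) x, ⟨i, x, hx, rfl⟩, hform x hx i⟩
  · -- commutes
    rintro u ⟨i, x, hx, rfl⟩
    have h1 : f ((f ^ i) x) = (f ^ (1 + i)) x := by rw [zpow_apply_add]; simp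
    rw [h1, hform x hx (1 + i), hform x hx i, zpow_apply_add]; simp
  · -- uniqueness
    intro h' hext' hequiv' u hu
    obtain ⟨i, x, hx, rfl⟩ := hu
    have hxS := hAS x hx
    have huS : (f ^ i) x ∈ S := ⟨i, x, hx, rfl⟩
    have h1 : h' ((f ^ i) x) ≤ (g ^ i) (h' x) :=
      (hequiv' _ huS x hxS i).1 le_rfl
    have h2 : h' x ≤ (g ^ (-i)) (h' ((f ^ i) x)) :=
      (hequiv' x hxS _ huS (-i)).1 (by rw [zpow_apply_neg_apply])
    have h3 : (g ^ i) (h' x) ≤ h' ((f ^ i) x) := by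
      have := (zpow_apply_le_iff g i).2 h2
      rw [← zpow_apply_add] at this
      simpa using this
    rw [hform x hx i, ← hext' x hx]
    exact le_antisymm h1 h3
end

section
/- Let P be a partial order, f an order automorphism of P, and x, y ∈ P with ¬(x ≤ y). Suppose that either (i) there exists c ∈ P with f(c) = c, c < x, and c incomparable to y, or (ii) there exists d ∈ P with f(d) = d, y < d, and d incomparable to x. Then ¬(f^n(x) ≤ y) for every n : ℤ (so there are no x' ∼_f x and y' ∼_f y with x' ≤ y'). -/
variable {P : Type*} [PartialOrder P]

/-- `x ∼_f y` iff there are `i j : ℤ` with `f^i x ≤ y ≤ f^j x`. -/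
def orbRel (f : P ≃o P) (x y : P) : Prop :=
  ∃ i j : ℤ, (f ^ i) x ≤ y ∧ y ≤ (f ^ j) x

lemma zpow_apply_apply (f : P ≃o P) (a b : ℤ) (x : P) :
    (f ^ a) ((f ^ b) x) = (f ^ (a + b)) x := by
  rw [zpow_add]; rfl

lemma fixed_zpow (f : P ≃o P) {c : P} (hc : f c = c) : ∀ n : ℤ, (f ^ n) c = c := by
  have hnat : ∀ n : ℕ, (f ^ n) c = c := by
    intro n
    induction n with
    | zero => rfl
    | succ k ih =>
      have : (f ^ (k + 1)) c = (f ^ k) (f c) := by rw [pow_succ]; rfl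
      rw [this, hc, ih]
  intro n
  induction n using Int.rec with
  | ofNat k => simpa using hnat k
  | negSucc k =>
    have h1 : (f ^ ((k : ℤ) + 1)) c = c := by
      have := hnat (k + 1)
      rw [← Nat.cast_succ, zpow_natCast]; exact this
    have h2 : (f ^ (Int.negSucc k)) ((f ^ ((k : ℤ) + 1)) c) = c := by
      rw [zpow_apply_apply]
      have : Int.negSucc k + ((k : ℤ) + 1) = 0 := by
        simp [Int.negSucc_eq]
      rw [this]; rfl
    rw [h1] at h2
    exact h2

/-- Preventing the weak order by fixed points: suppose `¬(x ≤ y)` and either (i) there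
is a fixed point `c < x` incomparable to `y`, or (ii) there is a fixed point `d > y`
incomparable to `x`. Then `¬(f^n x ≤ y)` for all `n : ℤ`, so there are no `x' ∼_f x` and
`y' ∼_f y` with `x' ≤ y'`. -/
theorem fixed_point_prevents_weakLe (f : P ≃o P) (x y : P) (hxy : ¬ x ≤ y)
    (hfix : (∃ c : P, f c = c ∧ c < x ∧ ¬ c ≤ y ∧ ¬ y ≤ c) ∨
            (∃ d : P, f d = d ∧ y < d ∧ ¬ d ≤ x ∧ ¬ x ≤ d)) :
    (∀ n : ℤ, ¬ (f ^ n) x ≤ y) ∧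
    ¬ ∃ x' y' : P, orbRel f x' x ∧ orbRel f y' y ∧ x' ≤ y' := by
  have main : ∀ n : ℤ, ¬ (f ^ n) x ≤ y := by
    intro n hn
    rcases hfix with ⟨c, hfc, hcx, hcy, _⟩ | ⟨d, hfd, hyd, _, hxd⟩
    · have : (f ^ n) c ≤ (f ^ n) x := (f ^ n).monotone hcx.le
      rw [fixed_zpow f hfc n] at this
      exact hcy (this.trans hn)
    · have h1 : (f ^ n) x ≤ d := hn.trans hyd.le
      have h2 : (f ^ (-n)) ((f ^ n) x) ≤ (f ^ (-n)) d := (f ^ (-n)).monotone h1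
      rw [fixed_zpow f hfd (-n), zpow_apply_apply, neg_add_cancel] at h2
      exact hxd h2
  refine ⟨main, ?_⟩
  rintro ⟨x', y', ⟨i, j, hi, hj⟩, ⟨i', j', hi', hj'⟩, hle⟩
  have h1 : x ≤ (f ^ j) y' := hj.trans ((f ^ j).monotone hle)
  have h2 : (f ^ (i' - j)) x ≤ (f ^ (i' - j)) ((f ^ j) y') := (f ^ (i' - j)).monotone h1
  rw [zpow_apply_apply, sub_add_cancel] at h2
  exact main (i' - j) (h2.trans hi')
end
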